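/- Let θ be a random vector in ℝ^d whose d coordinates are i.i.d. exponential random variables with rate η = T^{−2/3}. For each n = 1, …, T let (X_n(θ), Y_n(θ)) be a measurable selection of global minimax points over 𝒳 × 𝒴 of (x, y) ↦ Σ_{m<n} L̄_m(x, y) − θ^⊤x, and let Y_n″(θ) be a measurable selection of maximizers of y ↦ Σ_{m<n} L̄_m(X_{n+1}(θ), y) over 𝒴. Let G > 0 be such that every L̄_n(·, y) is G-Lipschitz in x on ℝ^d (uniformly over y ∈ 𝒴) and every L̄_n(x, ·) is G-Lipschitz in y on 𝒴 (uniformly over x ∈ 𝒳), both with respect to the ℓ¹-norm. Then for every t ≤ T, E[ Σ_{n<t} L̄_n(X_n, Y_n) ] − min_{x∈𝒳} max_{y∈𝒴} Σ_{n<t} L̄_n(x, y) ≤ G Σ_{n<t} ( E‖X_n − X_{n+1}‖₁ + E‖Y_n − Y_{n+1}‖₁ + E‖Y_n″ − Y_{n+1}‖₁ ) + 2 T^{2/3} (log d + 1) x_max, where x_max = max_{x∈𝒳}‖x‖₁. -/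

import Mathlib

open Finset MeasureTheory ProbabilityTheory

section Aux
open MeasureTheory Real Set ProbabilityTheory Filter

lemma aux_tendsto (r a : ℝ) (hr : 0 < r) :
    Tendsto (fun x : ℝ => -((x - a + 1/r) * Real.exp (-(r * x)))) atTop (nhds 0) := by
  have h1 : Tendsto (fun x : ℝ => Real.exp (-(r * x))) atTop (nhds 0) := by
    have := Real.tendsto_exp_neg_atTop_nhds_zero.comp
      (Tendsto.const_mul_atTop hr tendsto_id)
    simpa [Function.comp_def] using this
  have h2 : Tendsto (fun x : ℝ => x * Real.exp (-(r * x))) atTop (nhds 0) := by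
    have h3 := (tendsto_pow_mul_exp_neg_atTop_nhds_zero 1).comp
      (Tendsto.const_mul_atTop hr tendsto_id)
    have h4 : Tendsto (fun x : ℝ => (1/r) * ((fun y : ℝ => y ^ 1 * Real.exp (-y)) ((fun x : ℝ => r * x) x))) atTop
        (nhds ((1/r) * 0)) := h3.const_mul _
    rw [mul_zero] at h4
    refine h4.congr' (Filter.Eventually.of_forall fun x => ?_)
    simp only [pow_one]
    field_simp
  have := ((h2.add (h1.const_mul (1/r - a))).const_mul (-1))
  simp only [mul_zero, add_zero, neg_mul, one_mul, zero_add, neg_zero] at this ⊢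
  refine this.congr fun x => ?_
  ring

lemma aux_deriv (r a : ℝ) (hr : 0 < r) (x : ℝ) :
    HasDerivAt (fun x : ℝ => -((x - a + 1/r) * Real.exp (-(r * x))))
      (r * Real.exp (-(r * x)) * (x - a)) x := by
  have he : HasDerivAt (fun x : ℝ => Real.exp (-(r * x))) (-r * Real.exp (-(r * x))) x := by
    have : HasDerivAt (fun x : ℝ => -(r * x)) (-r) x := by
      simpa using ((hasDerivAt_id x).const_mul r).fun_neg
    simpa [mul_comm] using this.exp
  have hu : HasDerivAt (fun x : ℝ => x - a + 1/r) 1 x := by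
    simpa using ((hasDerivAt_id x).sub_const a).add_const (1/r)
  have : HasDerivAt (fun x : ℝ => -((x - a + 1/r) * Real.exp (-(r * x)))) _ x := (hu.mul he).neg
  convert this using 1
  field_simp
  ring

lemma aux_exp_integral (r a : ℝ) (hr : 0 < r) :
    (∫ x in Ioi a, r * Real.exp (-(r * x)) * (x - a)) = Real.exp (-(r * a)) / r ∧
    IntegrableOn (fun x => r * Real.exp (-(r * x)) * (x - a)) (Ioi a) := by
  have hderiv : ∀ x ∈ Ici a, HasDerivAt (fun x : ℝ => -((x - a + 1/r) * Real.exp (-(r * x))))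
      (r * Real.exp (-(r * x)) * (x - a)) x := fun x _ => aux_deriv r a hr x
  have hpos : ∀ x ∈ Ioi a, 0 ≤ r * Real.exp (-(r * x)) * (x - a) := by
    intro x hx
    have : (0:ℝ) ≤ x - a := by simp at hx; linarith
    positivity
  refine ⟨?_, integrableOn_Ioi_deriv_of_nonneg' hderiv hpos (aux_tendsto r a hr)⟩
  rw [integral_Ioi_of_hasDerivAt_of_nonneg' hderiv hpos (aux_tendsto r a hr)]
  have hne : r ≠ 0 := ne_of_gt hr
  field_simp
  ring

lemma exponentialPDFReal_eq' (r x : ℝ) :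
    exponentialPDFReal r x = if 0 ≤ x then r * Real.exp (-(r * x)) else 0 := by
  rw [exponentialPDFReal, gammaPDFReal]
  simp only [rpow_one, Real.Gamma_one, div_one, sub_self, rpow_zero, mul_one]

lemma aux_expMeasure_integral (r a : ℝ) (hr : 0 < r) (ha : 0 ≤ a) :
    Integrable (fun x => max (|x| - a) 0) (expMeasure r) ∧
    (∫ x, max (|x| - a) 0 ∂(expMeasure r)) = Real.exp (-(r * a)) / r := by
  set p : ℝ → NNReal := fun x => (exponentialPDFReal r x).toNNReal with hp
  have p_meas : Measurable p := (measurable_exponentialPDFReal r).real_toNNReal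
  have hmeq : expMeasure r = volume.withDensity (fun x => (p x : ENNReal)) := by
    rfl
  have hpt : (fun x => p x • max (|x| - a) 0)
      = (Ioi a).indicator (fun x => r * Real.exp (-(r * x)) * (x - a)) := by
    funext x
    simp only [NNReal.smul_def, hp]
    rcases lt_or_ge x 0 with hx | hx
    · rw [exponentialPDFReal_eq', if_neg (not_le.mpr hx)]
      rw [Set.indicator_of_notMem (by simp; linarith)]
      simp
    · rw [exponentialPDFReal_eq', if_pos hx,
        Real.coe_toNNReal _ (by positivity), abs_of_nonneg hx]
      rcases le_or_gt x a with hxa | hxa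
      · rw [Set.indicator_of_notMem (by simpa using hxa)]
        rw [max_eq_right (by linarith), smul_eq_mul, mul_zero]
      · rw [Set.indicator_of_mem (by simpa using hxa)]
        rw [max_eq_left (by linarith), smul_eq_mul]
  have hint : Integrable (fun x => p x • max (|x| - a) 0) volume := by
    rw [hpt]
    exact ((aux_exp_integral r a hr).2).integrable_indicator measurableSet_Ioi
  constructor
  · rw [hmeq]
    exact (integrable_withDensity_iff_integrable_smul p_meas).mpr hint
  · rw [hmeq, integral_withDensity_eq_integral_smul p_meas, hpt,
      integral_indicator measurableSet_Ioi]
    exact (aux_exp_integral r a hr).1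

/-- ℓ¹ distance bounded by dimension times sup distance. -/
lemma aux_sum_abs_le (k : ℕ) (x y : Fin k → ℝ) :
    ∑ j, |x j - y j| ≤ (k : ℝ) * dist x y := by
  calc ∑ j, |x j - y j| ≤ ∑ _j : Fin k, dist x y :=
        Finset.sum_le_sum fun j _ => by
          rw [← Real.dist_eq]; exact dist_le_pi_dist x y j
    _ = (k : ℝ) * dist x y := by simp [mul_comm]

end Aux
set_option maxHeartbeats 1000000 in
/-- first inequality of Lemma 2, perturbed WESC regret bound:
`E[Σ_{n<t} L̄ₙ(Xₙ,Yₙ)] − min_{x∈𝒳} max_{y∈𝒴} Σ_{n<t} L̄ₙ(x,y)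
  ≤ G Σ_{n<t}(E‖Xₙ−X_{n+1}‖₁ + E‖Yₙ−Y_{n+1}‖₁ + E‖Yₙ″−Y_{n+1}‖₁)
    + 2 T^{2/3}(log d + 1) x_max`. -/
theorem stmt_19
    (d I T : ℕ) (hd : 0 < d) (hI : 0 < I) (hT : 0 < T)
    (𝒳 : Set (Fin d → ℝ)) (h𝒳ne : 𝒳.Nonempty) (h𝒳cp : IsCompact 𝒳)
    (xmax : ℝ) (hxmax : IsGreatest ((fun x => ∑ j, |x j|) '' 𝒳) xmax)
    (ymax : ℝ) (hymax : 0 < ymax)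
    (𝒴 : Set (Fin I → ℝ)) (h𝒴 : 𝒴 = {y | ∀ i, y i ∈ Set.Icc (0 : ℝ) ymax})
    (G0 : ℝ) (hG0 : 0 < G0)
    (f : ℕ → (Fin d → ℝ) → ℝ)
    (c : Fin I → ℕ → (Fin d → ℝ) → ℝ)
    (b : Fin I → ℝ) (hb : ∀ i, 0 ≤ b i)
    (hf : ∀ n, 1 ≤ n → n ≤ T → ∀ x x' : Fin d → ℝ,
      |f n x - f n x'| ≤ G0 * ∑ j, |x j - x' j|)
    (hc : ∀ i n, 1 ≤ n → n ≤ T → ∀ x x' : Fin d → ℝ,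
      |c i n x - c i n x'| ≤ G0 * ∑ j, |x j - x' j|)
    (lam : ℝ) (hlam : 0 < lam)
    (L : ℕ → (Fin d → ℝ) → (Fin I → ℝ) → ℝ)
    (hL : ∀ n x y, L n x y = f n x + ∑ i, y i * (c i n x - b i))
    (Lbar : ℕ → (Fin d → ℝ) → (Fin I → ℝ) → ℝ)
    (hLbar : ∀ n x y, Lbar n x y
      = L n x y + (lam / (n : ℝ) ^ ((1 : ℝ) / 9)) * ∑ i, Real.log (y i + 1))
    -- `G`-Lipschitz continuity of `L̄ₙ` in each direction, w.r.t. the ℓ¹-norm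
    (G : ℝ) (hG : 0 < G)
    (hGx : ∀ n, 1 ≤ n → n ≤ T → ∀ y ∈ 𝒴, ∀ x x' : Fin d → ℝ,
      |Lbar n x y - Lbar n x' y| ≤ G * ∑ j, |x j - x' j|)
    (hGy : ∀ n, 1 ≤ n → n ≤ T → ∀ x ∈ 𝒳, ∀ y ∈ 𝒴, ∀ y' ∈ 𝒴,
      |Lbar n x y - Lbar n x y'| ≤ G * ∑ i, |y i - y' i|)
    -- probability space and the exponential perturbation vector `θ`
    (Ω : Type) [MeasureSpace Ω] [IsProbabilityMeasure (ℙ : Measure Ω)]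
    (θ : Ω → Fin d → ℝ) (hθmeas : Measurable θ)
    (hθindep : iIndepFun (m := fun _ : Fin d => Real.measurableSpace) (fun k ω => θ ω k) ℙ)
    (hθdist : ∀ k : Fin d, Measure.map (fun ω => θ ω k) ℙ
      = expMeasure ((T : ℝ) ^ (-(2 : ℝ) / 3)))
    -- measurable selections of global minimax points of the perturbed offline oracles
    (X : ℕ → (Fin d → ℝ) → Fin d → ℝ) (Y : ℕ → (Fin d → ℝ) → Fin I → ℝ)
    (hXmeas : ∀ n, Measurable (X n)) (hYmeas : ∀ n, Measurable (Y n))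
    (hXY : ∀ n, 1 ≤ n → n ≤ T → ∀ θv : Fin d → ℝ,
      X n θv ∈ 𝒳 ∧ Y n θv ∈ 𝒴 ∧
      (∀ y ∈ 𝒴,
        (∑ m ∈ Finset.Ico 1 n, Lbar m (X n θv) y) - ∑ j, θv j * X n θv j
          ≤ (∑ m ∈ Finset.Ico 1 n, Lbar m (X n θv) (Y n θv)) - ∑ j, θv j * X n θv j) ∧
      (∀ x ∈ 𝒳,
        (∑ m ∈ Finset.Ico 1 n, Lbar m (X n θv) (Y n θv)) - ∑ j, θv j * X n θv j
          ≤ sSup ((fun y' => (∑ m ∈ Finset.Ico 1 n, Lbar m x y') - ∑ j, θv j * x j) '' 𝒴)))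
    -- measurable selection `Yₙ″` of maximizers of `y ↦ Σ_{m<n} L̄ₘ(X_{n+1}(θ), y)` over `𝒴`
    (Y'' : ℕ → (Fin d → ℝ) → Fin I → ℝ) (hY''meas : ∀ n, Measurable (Y'' n))
    (hY'' : ∀ n, 1 ≤ n → n ≤ T → ∀ θv : Fin d → ℝ,
      Y'' n θv ∈ 𝒴 ∧
      ∀ y ∈ 𝒴, ∑ m ∈ Finset.Ico 1 n, Lbar m (X (n + 1) θv) y
        ≤ ∑ m ∈ Finset.Ico 1 n, Lbar m (X (n + 1) θv) (Y'' n θv)) :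
    ∀ t, t ≤ T →
      (∫ ω, ∑ n ∈ Finset.Ico 1 t, Lbar n (X n (θ ω)) (Y n (θ ω)) ∂ℙ)
          - sInf ((fun x =>
              sSup ((fun y => ∑ n ∈ Finset.Ico 1 t, Lbar n x y) '' 𝒴)) '' 𝒳)
        ≤ G * (∑ n ∈ Finset.Ico 1 t,
              ((∫ ω, ∑ j, |X n (θ ω) j - X (n + 1) (θ ω) j| ∂ℙ)
                + (∫ ω, ∑ i, |Y n (θ ω) i - Y (n + 1) (θ ω) i| ∂ℙ)
                + ∫ ω, ∑ i, |Y'' n (θ ω) i - Y (n + 1) (θ ω) i| ∂ℙ))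
            + 2 * (T : ℝ) ^ ((2 : ℝ) / 3) * (Real.log d + 1) * xmax := by
  intro t ht
  -- basic positivity facts
  have hdR : (1:ℝ) ≤ (d:ℝ) := by exact_mod_cast hd
  have hlogd : 0 ≤ Real.log d := Real.log_nonneg hdR
  have hTpos : (0:ℝ) < (T:ℝ) := by exact_mod_cast hT
  set η : ℝ := (T : ℝ) ^ (-(2:ℝ)/3) with hηdef
  have hηpos : 0 < η := Real.rpow_pos_of_pos hTpos _
  have hηinv : 1/η = (T:ℝ) ^ ((2:ℝ)/3) := by
    rw [hηdef, show (-(2:ℝ)/3) = -((2:ℝ)/3) by ring, Real.rpow_neg hTpos.le]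
    simp [one_div]
  obtain ⟨x0, hx0X, hx0v⟩ := hxmax.1
  have hxmax0 : 0 ≤ xmax := by
    rw [← hx0v]; positivity
  have hxmaxUB : ∀ x ∈ 𝒳, ∑ j, |x j| ≤ xmax := fun x hx =>
    hxmax.2 (Set.mem_image_of_mem _ hx)
  have habs_sub : ∀ u v : ℝ, |u - v| ≤ |u| + |v| := by
    intro u v
    calc |u - v| = |u + -v| := by rw [sub_eq_add_neg]
      _ ≤ |u| + |-v| := abs_add_le _ _
      _ = |u| + |v| := by rw [abs_neg]
  have hsumX : ∀ x ∈ 𝒳, ∀ x' ∈ 𝒳, ∑ j, |x j - x' j| ≤ 2 * xmax := by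
    intro x hx x' hx'
    calc ∑ j, |x j - x' j| ≤ ∑ j, (|x j| + |x' j|) :=
          Finset.sum_le_sum fun j _ => habs_sub _ _
      _ = (∑ j, |x j|) + ∑ j, |x' j| := Finset.sum_add_distrib
      _ ≤ xmax + xmax := add_le_add (hxmaxUB x hx) (hxmaxUB x' hx')
      _ = 2 * xmax := by ring
  -- facts about 𝒴
  have hy0 : (fun _ : Fin I => (0:ℝ)) ∈ 𝒴 := by
    rw [h𝒴]; intro i; exact ⟨le_refl _, hymax.le⟩
  have h𝒴ne : 𝒴.Nonempty := ⟨_, hy0⟩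
  have h𝒴cp : IsCompact 𝒴 := by
    have : 𝒴 = Set.pi Set.univ (fun _ : Fin I => Set.Icc (0:ℝ) ymax) := by
      rw [h𝒴]; ext y; simp [Set.mem_pi, Pi.le_def, forall_and]
    rw [this]; exact isCompact_univ_pi fun _ => isCompact_Icc
  have hYbd : ∀ y ∈ 𝒴, ∀ i, 0 ≤ y i ∧ y i ≤ ymax := by
    intro y hy i; rw [h𝒴] at hy; exact hy i
  have hsumY : ∀ y ∈ 𝒴, ∀ y' ∈ 𝒴, ∑ i, |y i - y' i| ≤ (I:ℝ) * ymax := by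
    intro y hy y' hy'
    calc ∑ i, |y i - y' i| ≤ ∑ _i : Fin I, ymax := by
          apply Finset.sum_le_sum
          intro i _
          have h1 := (hYbd y hy i).1; have h2 := (hYbd y hy i).2
          have h3 := (hYbd y' hy' i).1; have h4 := (hYbd y' hy' i).2
          rw [abs_sub_le_iff]; constructor <;> linarith
      _ = (I:ℝ) * ymax := by simp [mul_comm]
  rcases Nat.lt_or_ge t 1 with ht0 | ht1
  · -- degenerate case t = 0
    have ht0' : t = 0 := by omega
    subst ht0'
    have hIco : Finset.Ico 1 0 = ∅ := by simp
    rw [hIco]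
    simp only [Finset.sum_empty, integral_zero, mul_zero, zero_sub]
    have himg : (fun x : Fin d → ℝ =>
        sSup ((fun _y : Fin I → ℝ => (0:ℝ)) '' 𝒴)) '' 𝒳 = {0} := by
      have h1 : (fun _y : Fin I → ℝ => (0:ℝ)) '' 𝒴 = {0} := h𝒴ne.image_const 0
      have h2 : (fun x : Fin d → ℝ => sSup ((fun _y : Fin I → ℝ => (0:ℝ)) '' 𝒴))
          = fun _ => (0:ℝ) := by
        funext x; rw [h1, csSup_singleton]
      rw [h2]; exact h𝒳ne.image_const 0
    rw [himg, csInf_singleton]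
    have : (0:ℝ) ≤ 2 * (T:ℝ) ^ ((2:ℝ)/3) * (Real.log d + 1) * xmax := by
      have h1 : (0:ℝ) ≤ (T:ℝ) ^ ((2:ℝ)/3) := (Real.rpow_pos_of_pos hTpos _).le
      have h2 : (0:ℝ) ≤ Real.log d + 1 := by linarith
      positivity
    linarith
  -- main case 1 ≤ t
  have htT : t ≤ T := ht
  have hT1 : 1 ≤ T := le_trans ht1 htT
  have hmemIco : ∀ n ∈ Finset.Ico 1 t, 1 ≤ n ∧ n ≤ T ∧ n + 1 ≤ T := by
    intro n hn
    rw [Finset.mem_Ico] at hn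
    omega
  -- ℓ¹-Lipschitz property of partial sums in x
  have hSx : ∀ (u u' : Fin d → ℝ), ∀ y ∈ 𝒴,
      |(∑ n ∈ Finset.Ico 1 t, Lbar n u y) - ∑ n ∈ Finset.Ico 1 t, Lbar n u' y|
        ≤ (t:ℝ) * G * ∑ j, |u j - u' j| := by
    intro u u' y hy
    have hcard : ((Finset.Ico 1 t).card : ℝ) ≤ (t:ℝ) := by
      rw [Nat.card_Ico]; exact_mod_cast Nat.sub_le t 1
    have hterm : (0:ℝ) ≤ G * ∑ j, |u j - u' j| := by positivity
    calc |(∑ n ∈ Finset.Ico 1 t, Lbar n u y) - ∑ n ∈ Finset.Ico 1 t, Lbar n u' y|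
        = |∑ n ∈ Finset.Ico 1 t, (Lbar n u y - Lbar n u' y)| := by
          rw [Finset.sum_sub_distrib]
      _ ≤ ∑ n ∈ Finset.Ico 1 t, |Lbar n u y - Lbar n u' y| :=
          Finset.abs_sum_le_sum_abs _ _
      _ ≤ ∑ _n ∈ Finset.Ico 1 t, (G * ∑ j, |u j - u' j|) := by
          apply Finset.sum_le_sum
          intro n hn
          exact hGx n (hmemIco n hn).1 (hmemIco n hn).2.1 y hy u u'
      _ = ((Finset.Ico 1 t).card : ℝ) * (G * ∑ j, |u j - u' j|) := by
          rw [Finset.sum_const, nsmul_eq_mul]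
      _ ≤ (t:ℝ) * (G * ∑ j, |u j - u' j|) :=
          mul_le_mul_of_nonneg_right hcard hterm
      _ = (t:ℝ) * G * ∑ j, |u j - u' j| := by ring
  -- same in y, for x ∈ 𝒳
  have hSy : ∀ x ∈ 𝒳, ∀ y ∈ 𝒴, ∀ y' ∈ 𝒴,
      |(∑ n ∈ Finset.Ico 1 t, Lbar n x y) - ∑ n ∈ Finset.Ico 1 t, Lbar n x y'|
        ≤ (t:ℝ) * G * ∑ i, |y i - y' i| := by
    intro x hx y hy y' hy'
    have hcard : ((Finset.Ico 1 t).card : ℝ) ≤ (t:ℝ) := by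
      rw [Nat.card_Ico]; exact_mod_cast Nat.sub_le t 1
    have hterm : (0:ℝ) ≤ G * ∑ i, |y i - y' i| := by positivity
    calc |(∑ n ∈ Finset.Ico 1 t, Lbar n x y) - ∑ n ∈ Finset.Ico 1 t, Lbar n x y'|
        = |∑ n ∈ Finset.Ico 1 t, (Lbar n x y - Lbar n x y')| := by
          rw [Finset.sum_sub_distrib]
      _ ≤ ∑ n ∈ Finset.Ico 1 t, |Lbar n x y - Lbar n x y'| :=
          Finset.abs_sum_le_sum_abs _ _
      _ ≤ ∑ _n ∈ Finset.Ico 1 t, (G * ∑ i, |y i - y' i|) := by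
          apply Finset.sum_le_sum
          intro n hn
          exact hGy n (hmemIco n hn).1 (hmemIco n hn).2.1 x hx y hy y' hy'
      _ = ((Finset.Ico 1 t).card : ℝ) * (G * ∑ i, |y i - y' i|) := by
          rw [Finset.sum_const, nsmul_eq_mul]
      _ ≤ (t:ℝ) * (G * ∑ i, |y i - y' i|) :=
          mul_le_mul_of_nonneg_right hcard hterm
      _ = (t:ℝ) * G * ∑ i, |y i - y' i| := by ring
  -- for each x ∈ 𝒳 there is a maximizer over 𝒴, realizing the sSup
  have hYsel : ∀ x ∈ 𝒳, ∃ yx ∈ 𝒴, (∀ y ∈ 𝒴,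
      (∑ n ∈ Finset.Ico 1 t, Lbar n x y) ≤ ∑ n ∈ Finset.Ico 1 t, Lbar n x yx) ∧
      sSup ((fun y => ∑ n ∈ Finset.Ico 1 t, Lbar n x y) '' 𝒴)
        = ∑ n ∈ Finset.Ico 1 t, Lbar n x yx := by
    intro x hx
    have hcont : ContinuousOn (fun y => ∑ n ∈ Finset.Ico 1 t, Lbar n x y) 𝒴 := by
      have hC : (0:ℝ) ≤ (t:ℝ) * G * (I:ℝ) := by positivity
      apply LipschitzOnWith.continuousOn (K := Real.toNNReal ((t:ℝ) * G * (I:ℝ)))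
      rw [lipschitzOnWith_iff_dist_le_mul]
      intro y hy y' hy'
      rw [Real.dist_eq, Real.coe_toNNReal _ hC]
      calc |(∑ n ∈ Finset.Ico 1 t, Lbar n x y) - ∑ n ∈ Finset.Ico 1 t, Lbar n x y'|
          ≤ (t:ℝ) * G * ∑ i, |y i - y' i| := hSy x hx y hy y' hy'
        _ ≤ (t:ℝ) * G * ((I:ℝ) * dist y y') := by
            apply mul_le_mul_of_nonneg_left (aux_sum_abs_le I y y')
            positivity
        _ = (t:ℝ) * G * (I:ℝ) * dist y y' := by ring
    obtain ⟨yx, hyx, hmax⟩ := h𝒴cp.exists_isMaxOn h𝒴ne hcont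
    refine ⟨yx, hyx, fun y hy => hmax hy, ?_⟩
    apply IsGreatest.csSup_eq
    refine ⟨Set.mem_image_of_mem _ hyx, ?_⟩
    rintro z ⟨y, hy, rfl⟩
    exact hmax hy
  -- continuity of the max-function F on 𝒳
  have hFcont : ContinuousOn
      (fun x => sSup ((fun y => ∑ n ∈ Finset.Ico 1 t, Lbar n x y) '' 𝒴)) 𝒳 := by
    have hC : (0:ℝ) ≤ (t:ℝ) * G * (d:ℝ) := by positivity
    apply LipschitzOnWith.continuousOn (K := Real.toNNReal ((t:ℝ) * G * (d:ℝ)))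
    rw [lipschitzOnWith_iff_dist_le_mul]
    intro x hx x' hx'
    obtain ⟨yx, hyxY, hyxMax, hFx⟩ := hYsel x hx
    obtain ⟨yx', hyx'Y, hyx'Max, hFx'⟩ := hYsel x' hx'
    rw [Real.dist_eq, Real.coe_toNNReal _ hC, hFx, hFx']
    have hd1 := le_trans (le_abs_self _) (hSx x x' yx hyxY)
    have hd2 := le_trans (le_abs_self _) (hSx x' x yx' hyx'Y)
    have hdsym : ∑ j, |x' j - x j| = ∑ j, |x j - x' j| :=
      Finset.sum_congr rfl fun j _ => abs_sub_comm _ _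
    rw [hdsym] at hd2
    have hdd : (t:ℝ) * G * ∑ j, |x j - x' j| ≤ (t:ℝ) * G * ((d:ℝ) * dist x x') := by
      apply mul_le_mul_of_nonneg_left (aux_sum_abs_le d x x')
      positivity
    have hm1 := hyx'Max yx hyxY
    have hm2 := hyxMax yx' hyx'Y
    rw [abs_sub_le_iff]
    constructor <;> [skip; skip] <;> nlinarith [hd1, hd2, hdd, hm1, hm2]
  -- minimizer over 𝒳
  obtain ⟨xs, hxsX, hxsMin⟩ := h𝒳cp.exists_isMinOn h𝒳ne hFcont
  obtain ⟨ys, hysY, hysMax, hFxs⟩ := hYsel xs hxsX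
  have hInf : sInf ((fun x =>
      sSup ((fun y => ∑ n ∈ Finset.Ico 1 t, Lbar n x y) '' 𝒴)) '' 𝒳)
      = ∑ n ∈ Finset.Ico 1 t, Lbar n xs ys := by
    rw [← hFxs]
    apply IsLeast.csInf_eq
    refine ⟨Set.mem_image_of_mem _ hxsX, ?_⟩
    rintro z ⟨x, hx, rfl⟩
    exact hxsMin hx
  -- be-the-leader telescoping
  have key1 : ∀ n, 1 ≤ n → n ≤ T → ∀ θv : Fin d → ℝ,
      (∑ m ∈ Finset.Ico 1 n, Lbar m (X (m+1) θv) (Y'' m θv)) - (∑ j, θv j * X 1 θv j)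
        ≤ (∑ m ∈ Finset.Ico 1 n, Lbar m (X n θv) (Y n θv)) - ∑ j, θv j * X n θv j := by
    intro n hn
    induction n, hn using Nat.le_induction with
    | base => intro _ θv; simp
    | succ n hn ih =>
      intro hnT θv
      have hnT' : n ≤ T := by omega
      have ihv := ih hnT' θv
      obtain ⟨hXm, hYm, hYo, hXo⟩ := hXY n hn hnT' θv
      obtain ⟨hX1m, hY1m, hY1o, hX1o⟩ := hXY (n+1) (by omega) hnT θv
      obtain ⟨hY''m, hY''o⟩ := hY'' n hn hnT' θv
      have hsup : sSup ((fun y' => (∑ m ∈ Finset.Ico 1 n, Lbar m (X (n+1) θv) y')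
            - ∑ j, θv j * X (n+1) θv j) '' 𝒴)
          = (∑ m ∈ Finset.Ico 1 n, Lbar m (X (n+1) θv) (Y'' n θv))
            - ∑ j, θv j * X (n+1) θv j := by
        apply IsGreatest.csSup_eq
        refine ⟨Set.mem_image_of_mem _ hY''m, ?_⟩
        rintro z ⟨y, hy, rfl⟩
        have := hY''o y hy
        simp only
        linarith
      have step1 := hXo (X (n+1) θv) hX1m
      rw [hsup] at step1
      have step2 := hY1o (Y'' n θv) hY''m
      rw [Finset.sum_Ico_succ_top hn, Finset.sum_Ico_succ_top hn] at step2
      rw [Finset.sum_Ico_succ_top hn, Finset.sum_Ico_succ_top hn]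
      linarith
  -- comparison with the offline optimum
  have key2 : ∀ θv : Fin d → ℝ,
      (∑ n ∈ Finset.Ico 1 t, Lbar n (X t θv) (Y t θv)) - ∑ j, θv j * X t θv j
        ≤ (∑ n ∈ Finset.Ico 1 t, Lbar n xs ys) - ∑ j, θv j * xs j := by
    intro θv
    obtain ⟨hXm, hYm, hYo, hXo⟩ := hXY t ht1 htT θv
    have hsup : sSup ((fun y' => (∑ m ∈ Finset.Ico 1 t, Lbar m xs y')
          - ∑ j, θv j * xs j) '' 𝒴)
        = (∑ m ∈ Finset.Ico 1 t, Lbar m xs ys) - ∑ j, θv j * xs j := by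
      apply IsGreatest.csSup_eq
      refine ⟨Set.mem_image_of_mem _ hysY, ?_⟩
      rintro z ⟨y, hy, rfl⟩
      have := hysMax y hy
      simp only
      linarith
    have := hXo xs hxsX
    rw [hsup] at this
    exact this
  -- stability bound
  have key3 : ∀ n, 1 ≤ n → n + 1 ≤ T → ∀ θv : Fin d → ℝ,
      Lbar n (X n θv) (Y n θv) ≤ Lbar n (X (n+1) θv) (Y'' n θv)
        + G * ((∑ j, |X n θv j - X (n+1) θv j|) + (∑ i, |Y n θv i - Y (n+1) θv i|)
            + ∑ i, |Y'' n θv i - Y (n+1) θv i|) := by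
    intro n hn hnT θv
    have hnT' : n ≤ T := by omega
    obtain ⟨hXm, hYm, -, -⟩ := hXY n hn hnT' θv
    obtain ⟨hXm', hYm', -, -⟩ := hXY (n+1) (by omega) hnT θv
    obtain ⟨hY''m, -⟩ := hY'' n hn hnT' θv
    have h1 := le_trans (le_abs_self _) (hGx n hn hnT' (Y n θv) hYm (X n θv) (X (n+1) θv))
    have h2 := le_trans (le_abs_self _)
      (hGy n hn hnT' (X (n+1) θv) hXm' (Y n θv) hYm (Y (n+1) θv) hYm')
    have h3 := le_trans (le_abs_self _)
      (hGy n hn hnT' (X (n+1) θv) hXm' (Y (n+1) θv) hYm' (Y'' n θv) hY''m)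
    have habs : ∑ i, |Y (n+1) θv i - Y'' n θv i| = ∑ i, |Y'' n θv i - Y (n+1) θv i| :=
      Finset.sum_congr rfl fun i _ => abs_sub_comm _ _
    rw [habs] at h3
    have heq : G * ((∑ j, |X n θv j - X (n+1) θv j|) + (∑ i, |Y n θv i - Y (n+1) θv i|)
          + ∑ i, |Y'' n θv i - Y (n+1) θv i|)
        = G * (∑ j, |X n θv j - X (n+1) θv j|) + G * (∑ i, |Y n θv i - Y (n+1) θv i|)
          + G * ∑ i, |Y'' n θv i - Y (n+1) θv i| := by ring
    linarith
  -- the perturbation threshold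
  set aa : ℝ := Real.log d / η with haadef
  have haa : 0 ≤ aa := div_nonneg hlogd hηpos.le
  -- pointwise regret bound
  have keyPt : ∀ θv : Fin d → ℝ,
      ∑ n ∈ Finset.Ico 1 t, Lbar n (X n θv) (Y n θv)
        ≤ (∑ n ∈ Finset.Ico 1 t, Lbar n xs ys)
          + G * (∑ n ∈ Finset.Ico 1 t, ((∑ j, |X n θv j - X (n+1) θv j|)
              + (∑ i, |Y n θv i - Y (n+1) θv i|) + ∑ i, |Y'' n θv i - Y (n+1) θv i|))
          + (2 * xmax * aa + 2 * xmax * ∑ j, max (|θv j| - aa) 0) := by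
    intro θv
    have hsum3 : ∑ n ∈ Finset.Ico 1 t, Lbar n (X n θv) (Y n θv)
        ≤ (∑ n ∈ Finset.Ico 1 t, Lbar n (X (n+1) θv) (Y'' n θv))
          + G * (∑ n ∈ Finset.Ico 1 t, ((∑ j, |X n θv j - X (n+1) θv j|)
              + (∑ i, |Y n θv i - Y (n+1) θv i|) + ∑ i, |Y'' n θv i - Y (n+1) θv i|)) := by
      calc ∑ n ∈ Finset.Ico 1 t, Lbar n (X n θv) (Y n θv)
          ≤ ∑ n ∈ Finset.Ico 1 t, (Lbar n (X (n+1) θv) (Y'' n θv)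
            + G * ((∑ j, |X n θv j - X (n+1) θv j|) + (∑ i, |Y n θv i - Y (n+1) θv i|)
              + ∑ i, |Y'' n θv i - Y (n+1) θv i|)) := by
            apply Finset.sum_le_sum
            intro n hn
            exact key3 n (hmemIco n hn).1 (hmemIco n hn).2.2 θv
        _ = _ := by rw [Finset.sum_add_distrib, Finset.mul_sum]
    have h1v := key1 t ht1 htT θv
    have h2v := key2 θv
    have hX1m : X 1 θv ∈ 𝒳 := (hXY 1 le_rfl hT1 θv).1
    have hpert : (∑ j, θv j * X 1 θv j) - (∑ j, θv j * xs j)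
        ≤ 2 * xmax * aa + 2 * xmax * ∑ j, max (|θv j| - aa) 0 := by
      have hcsum : ∑ j, |X 1 θv j - xs j| ≤ 2 * xmax := hsumX _ hX1m _ hxsX
      have hcj : ∀ j, |X 1 θv j - xs j| ≤ 2 * xmax := fun j =>
        le_trans (Finset.single_le_sum (f := fun j => |X 1 θv j - xs j|)
          (fun j _ => abs_nonneg _) (Finset.mem_univ j)) hcsum
      have hstep : ∀ j, θv j * X 1 θv j - θv j * xs j
          ≤ aa * |X 1 θv j - xs j| + 2 * xmax * max (|θv j| - aa) 0 := by
        intro j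
        have e2 : θv j * (X 1 θv j - xs j) ≤ |θv j| * |X 1 θv j - xs j| := by
          calc θv j * (X 1 θv j - xs j) ≤ |θv j * (X 1 θv j - xs j)| := le_abs_self _
            _ = |θv j| * |X 1 θv j - xs j| := abs_mul _ _
        have e3 : |θv j| ≤ aa + max (|θv j| - aa) 0 := by
          have := le_max_left (|θv j| - aa) (0:ℝ)
          linarith
        have e4 : |θv j| * |X 1 θv j - xs j|
            ≤ (aa + max (|θv j| - aa) 0) * |X 1 θv j - xs j| :=
          mul_le_mul_of_nonneg_right e3 (abs_nonneg _)
        have e5 : max (|θv j| - aa) 0 * |X 1 θv j - xs j|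
            ≤ max (|θv j| - aa) 0 * (2 * xmax) :=
          mul_le_mul_of_nonneg_left (hcj j) (le_max_right _ 0)
        have e6 : (aa + max (|θv j| - aa) 0) * |X 1 θv j - xs j|
            = aa * |X 1 θv j - xs j| + max (|θv j| - aa) 0 * |X 1 θv j - xs j| := by ring
        have e1 : θv j * X 1 θv j - θv j * xs j = θv j * (X 1 θv j - xs j) := by ring
        linarith
      calc (∑ j, θv j * X 1 θv j) - (∑ j, θv j * xs j)
          = ∑ j, (θv j * X 1 θv j - θv j * xs j) := by rw [Finset.sum_sub_distrib]
        _ ≤ ∑ j, (aa * |X 1 θv j - xs j| + 2 * xmax * max (|θv j| - aa) 0) :=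
            Finset.sum_le_sum fun j _ => hstep j
        _ = aa * (∑ j, |X 1 θv j - xs j|) + 2 * xmax * ∑ j, max (|θv j| - aa) 0 := by
            rw [Finset.sum_add_distrib, ← Finset.mul_sum, ← Finset.mul_sum]
        _ ≤ aa * (2 * xmax) + 2 * xmax * ∑ j, max (|θv j| - aa) 0 := by
            have := mul_le_mul_of_nonneg_left hcsum haa
            linarith
        _ = 2 * xmax * aa + 2 * xmax * ∑ j, max (|θv j| - aa) 0 := by ring
    linarith
  -- === Integration ===
  -- continuity of f and c
  have hCf : ∀ n, 1 ≤ n → n ≤ T → Continuous (f n) := by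
    intro n h1 h2
    have h0 : (0:ℝ) ≤ G0 * (d:ℝ) := by positivity
    apply LipschitzWith.continuous (K := Real.toNNReal (G0 * (d:ℝ)))
    apply LipschitzWith.of_dist_le_mul
    intro x y
    rw [Real.dist_eq, Real.coe_toNNReal _ h0]
    calc |f n x - f n y| ≤ G0 * ∑ j, |x j - y j| := hf n h1 h2 x y
      _ ≤ G0 * ((d:ℝ) * dist x y) :=
          mul_le_mul_of_nonneg_left (aux_sum_abs_le d x y) hG0.le
      _ = G0 * (d:ℝ) * dist x y := by ring
  have hCc : ∀ i n, 1 ≤ n → n ≤ T → Continuous (c i n) := by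
    intro i n h1 h2
    have h0 : (0:ℝ) ≤ G0 * (d:ℝ) := by positivity
    apply LipschitzWith.continuous (K := Real.toNNReal (G0 * (d:ℝ)))
    apply LipschitzWith.of_dist_le_mul
    intro x y
    rw [Real.dist_eq, Real.coe_toNNReal _ h0]
    calc |c i n x - c i n y| ≤ G0 * ∑ j, |x j - y j| := hc i n h1 h2 x y
      _ ≤ G0 * ((d:ℝ) * dist x y) :=
          mul_le_mul_of_nonneg_left (aux_sum_abs_le d x y) hG0.le
      _ = G0 * (d:ℝ) * dist x y := by ring
  -- measurability of the composed losses
  have hmeasLbar : ∀ n, 1 ≤ n → n ≤ T →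
      ∀ (u : (Fin d → ℝ) → Fin d → ℝ) (v : (Fin d → ℝ) → Fin I → ℝ),
      Measurable u → Measurable v →
      Measurable (fun ω : Ω => Lbar n (u (θ ω)) (v (θ ω))) := by
    intro n h1 h2 u v hu hv
    have hu' : Measurable fun ω => u (θ ω) := hu.comp hθmeas
    have hv' : Measurable fun ω => v (θ ω) := hv.comp hθmeas
    have heq : (fun ω : Ω => Lbar n (u (θ ω)) (v (θ ω))) = fun ω =>
        f n (u (θ ω)) + (∑ i, v (θ ω) i * (c i n (u (θ ω)) - b i))
        + (lam / (n : ℝ) ^ ((1:ℝ)/9)) * ∑ i, Real.log (v (θ ω) i + 1) := by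
      funext ω; rw [hLbar, hL]
    rw [heq]
    apply Measurable.add
    apply Measurable.add
    · exact (hCf n h1 h2).measurable.comp hu'
    · exact Finset.measurable_sum _ fun i _ =>
        ((measurable_pi_apply i).comp hv').mul
          (((hCc i n h1 h2).measurable.comp hu').sub measurable_const)
    · exact measurable_const.mul (Finset.measurable_sum _ fun i _ =>
        Real.measurable_log.comp (((measurable_pi_apply i).comp hv').add measurable_const))
  -- uniform bound of the losses on 𝒳 × 𝒴
  have hbound : ∀ n, 1 ≤ n → n ≤ T → ∀ x ∈ 𝒳, ∀ y ∈ 𝒴,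
      |Lbar n x y| ≤ |Lbar n x0 (fun _ => 0)| + G * (2 * xmax) + G * ((I:ℝ) * ymax) := by
    intro n h1 h2 x hx y hy
    have e1 := hGx n h1 h2 y hy x x0
    have e2 := hGy n h1 h2 x0 hx0X y hy (fun _ => 0) hy0
    have e3 : ∑ j, |x j - x0 j| ≤ 2 * xmax := hsumX x hx x0 hx0X
    have e4 : ∑ i, |y i - (fun _ : Fin I => (0:ℝ)) i| ≤ (I:ℝ) * ymax := hsumY y hy _ hy0
    have e5 : |Lbar n x y| ≤ |Lbar n x y - Lbar n x0 y|
        + |Lbar n x0 y - Lbar n x0 (fun _ => 0)| + |Lbar n x0 (fun _ => 0)| := by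
      have e0 : Lbar n x y - Lbar n x0 y + (Lbar n x0 y - Lbar n x0 (fun _ => 0))
          + Lbar n x0 (fun _ => 0) = Lbar n x y := by ring
      calc |Lbar n x y| = |Lbar n x y - Lbar n x0 y + (Lbar n x0 y - Lbar n x0 (fun _ => 0))
            + Lbar n x0 (fun _ => 0)| := by rw [e0]
        _ ≤ _ := le_trans (abs_add_le _ _) (add_le_add_left (abs_add_le _ _) _)
    have e6 := mul_le_mul_of_nonneg_left e3 hG.le
    have e7 := mul_le_mul_of_nonneg_left e4 hG.le
    linarith
  -- integrability of the played losses
  have hintL : ∀ n ∈ Finset.Ico 1 t,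
      Integrable (fun ω => Lbar n (X n (θ ω)) (Y n (θ ω))) ℙ := by
    intro n hn
    obtain ⟨h1, h2, h3⟩ := hmemIco n hn
    apply Integrable.mono'
      (integrable_const (|Lbar n x0 (fun _ => 0)| + G * (2 * xmax) + G * ((I:ℝ) * ymax)))
      ((hmeasLbar n h1 h2 (X n) (Y n) (hXmeas n) (hYmeas n)).aestronglyMeasurable)
    apply ae_of_all
    intro ω
    rw [Real.norm_eq_abs]
    exact hbound n h1 h2 _ (hXY n h1 h2 (θ ω)).1 _ (hXY n h1 h2 (θ ω)).2.1
  have hint1 : Integrable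
      (fun ω => ∑ n ∈ Finset.Ico 1 t, Lbar n (X n (θ ω)) (Y n (θ ω))) ℙ :=
    integrable_finset_sum _ hintL
  -- integrability of the stability terms
  have hintA : ∀ n ∈ Finset.Ico 1 t,
      Integrable (fun ω => ∑ j, |X n (θ ω) j - X (n+1) (θ ω) j|) ℙ := by
    intro n hn
    obtain ⟨h1, h2, h3⟩ := hmemIco n hn
    apply Integrable.mono' (integrable_const (2 * xmax))
    · exact (Finset.measurable_sum _ fun j _ =>
        (((measurable_pi_apply j).comp ((hXmeas n).comp hθmeas)).sub
          ((measurable_pi_apply j).comp ((hXmeas (n+1)).comp hθmeas))).abs).aestronglyMeasurable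
    · apply ae_of_all
      intro ω
      rw [Real.norm_eq_abs, abs_of_nonneg (Finset.sum_nonneg fun j _ => abs_nonneg _)]
      exact hsumX _ (hXY n h1 h2 (θ ω)).1 _ (hXY (n+1) (by omega) h3 (θ ω)).1
  have hintB : ∀ n ∈ Finset.Ico 1 t,
      Integrable (fun ω => ∑ i, |Y n (θ ω) i - Y (n+1) (θ ω) i|) ℙ := by
    intro n hn
    obtain ⟨h1, h2, h3⟩ := hmemIco n hn
    apply Integrable.mono' (integrable_const ((I:ℝ) * ymax))
    · exact (Finset.measurable_sum _ fun i _ =>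
        (((measurable_pi_apply i).comp ((hYmeas n).comp hθmeas)).sub
          ((measurable_pi_apply i).comp ((hYmeas (n+1)).comp hθmeas))).abs).aestronglyMeasurable
    · apply ae_of_all
      intro ω
      rw [Real.norm_eq_abs, abs_of_nonneg (Finset.sum_nonneg fun i _ => abs_nonneg _)]
      exact hsumY _ (hXY n h1 h2 (θ ω)).2.1 _ (hXY (n+1) (by omega) h3 (θ ω)).2.1
  have hintC : ∀ n ∈ Finset.Ico 1 t,
      Integrable (fun ω => ∑ i, |Y'' n (θ ω) i - Y (n+1) (θ ω) i|) ℙ := by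
    intro n hn
    obtain ⟨h1, h2, h3⟩ := hmemIco n hn
    apply Integrable.mono' (integrable_const ((I:ℝ) * ymax))
    · exact (Finset.measurable_sum _ fun i _ =>
        (((measurable_pi_apply i).comp ((hY''meas n).comp hθmeas)).sub
          ((measurable_pi_apply i).comp ((hYmeas (n+1)).comp hθmeas))).abs).aestronglyMeasurable
    · apply ae_of_all
      intro ω
      rw [Real.norm_eq_abs, abs_of_nonneg (Finset.sum_nonneg fun i _ => abs_nonneg _)]
      exact hsumY _ (hY'' n h1 h2 (θ ω)).1 _ (hXY (n+1) (by omega) h3 (θ ω)).2.1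
  have hintStabSum : Integrable (fun ω => ∑ n ∈ Finset.Ico 1 t,
      ((∑ j, |X n (θ ω) j - X (n+1) (θ ω) j|) + (∑ i, |Y n (θ ω) i - Y (n+1) (θ ω) i|)
        + ∑ i, |Y'' n (θ ω) i - Y (n+1) (θ ω) i|)) ℙ :=
    integrable_finset_sum _ fun n hn => ((hintA n hn).add (hintB n hn)).add (hintC n hn)
  -- the exponential tail terms
  have hφcont : Continuous (fun x : ℝ => max (|x| - aa) 0) :=
    (continuous_abs.sub continuous_const).max continuous_const
  have hθj : ∀ j : Fin d, Measurable fun ω => θ ω j :=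
    fun j => (measurable_pi_apply j).comp hθmeas
  have hintE : ∀ j : Fin d, Integrable (fun ω => max (|θ ω j| - aa) 0) ℙ := by
    intro j
    have h0 := (aux_expMeasure_integral η aa hηpos haa).1
    rw [← hθdist j] at h0
    have := (integrable_map_measure hφcont.aestronglyMeasurable
      (hθj j).aemeasurable).mp h0
    simpa [Function.comp_def] using this
  have hvalE : ∀ j : Fin d, (∫ ω, max (|θ ω j| - aa) 0 ∂ℙ) = (1/(d:ℝ)) * (1/η) := by
    intro j
    have h0 := (aux_expMeasure_integral η aa hηpos haa).2
    rw [← hθdist j, integral_map (hθj j).aemeasurable hφcont.aestronglyMeasurable] at h0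
    rw [h0]
    have hηaa : η * aa = Real.log d := by
      rw [haadef]; field_simp
    have hdpos : (0:ℝ) < (d:ℝ) := by positivity
    rw [hηaa, Real.exp_neg, Real.exp_log hdpos]
    ring
  have hintESum : Integrable (fun ω => ∑ j, max (|θ ω j| - aa) 0) ℙ :=
    integrable_finset_sum _ fun j _ => hintE j
  -- collect the right-hand side
  have hIa : Integrable (fun ω => (∑ n ∈ Finset.Ico 1 t, Lbar n xs ys)
      + G * (∑ n ∈ Finset.Ico 1 t, ((∑ j, |X n (θ ω) j - X (n+1) (θ ω) j|)
          + (∑ i, |Y n (θ ω) i - Y (n+1) (θ ω) i|)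
          + ∑ i, |Y'' n (θ ω) i - Y (n+1) (θ ω) i|))) ℙ :=
    (integrable_const _).add (hintStabSum.const_mul G)
  have hIb : Integrable (fun ω => 2 * xmax * aa
      + 2 * xmax * ∑ j, max (|θ ω j| - aa) 0) ℙ :=
    (integrable_const _).add (hintESum.const_mul (2 * xmax))
  have hmono : (∫ ω, ∑ n ∈ Finset.Ico 1 t, Lbar n (X n (θ ω)) (Y n (θ ω)) ∂ℙ)
      ≤ ∫ ω, (((∑ n ∈ Finset.Ico 1 t, Lbar n xs ys)
        + G * (∑ n ∈ Finset.Ico 1 t, ((∑ j, |X n (θ ω) j - X (n+1) (θ ω) j|)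
          + (∑ i, |Y n (θ ω) i - Y (n+1) (θ ω) i|)
          + ∑ i, |Y'' n (θ ω) i - Y (n+1) (θ ω) i|)))
        + (2 * xmax * aa + 2 * xmax * ∑ j, max (|θ ω j| - aa) 0)) ∂ℙ :=
    integral_mono hint1 (hIa.add hIb) (fun ω => keyPt (θ ω))
  have hsplit : (∫ ω, (((∑ n ∈ Finset.Ico 1 t, Lbar n xs ys)
        + G * (∑ n ∈ Finset.Ico 1 t, ((∑ j, |X n (θ ω) j - X (n+1) (θ ω) j|)
          + (∑ i, |Y n (θ ω) i - Y (n+1) (θ ω) i|)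
          + ∑ i, |Y'' n (θ ω) i - Y (n+1) (θ ω) i|)))
        + (2 * xmax * aa + 2 * xmax * ∑ j, max (|θ ω j| - aa) 0)) ∂ℙ)
      = (∫ ω, ((∑ n ∈ Finset.Ico 1 t, Lbar n xs ys)
        + G * (∑ n ∈ Finset.Ico 1 t, ((∑ j, |X n (θ ω) j - X (n+1) (θ ω) j|)
          + (∑ i, |Y n (θ ω) i - Y (n+1) (θ ω) i|)
          + ∑ i, |Y'' n (θ ω) i - Y (n+1) (θ ω) i|))) ∂ℙ)
        + ∫ ω, (2 * xmax * aa + 2 * xmax * ∑ j, max (|θ ω j| - aa) 0) ∂ℙ :=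
    integral_add hIa hIb
  have hsplit1 : (∫ ω, ((∑ n ∈ Finset.Ico 1 t, Lbar n xs ys)
        + G * (∑ n ∈ Finset.Ico 1 t, ((∑ j, |X n (θ ω) j - X (n+1) (θ ω) j|)
          + (∑ i, |Y n (θ ω) i - Y (n+1) (θ ω) i|)
          + ∑ i, |Y'' n (θ ω) i - Y (n+1) (θ ω) i|))) ∂ℙ)
      = (∑ n ∈ Finset.Ico 1 t, Lbar n xs ys)
        + G * ∫ ω, (∑ n ∈ Finset.Ico 1 t, ((∑ j, |X n (θ ω) j - X (n+1) (θ ω) j|)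
          + (∑ i, |Y n (θ ω) i - Y (n+1) (θ ω) i|)
          + ∑ i, |Y'' n (θ ω) i - Y (n+1) (θ ω) i|)) ∂ℙ := by
    rw [integral_add (integrable_const _) (hintStabSum.const_mul G), integral_const]
    simp only [probReal_univ, one_smul]
    congr 1
    exact integral_const_mul _ _
  have hsplit2 : (∫ ω, (2 * xmax * aa + 2 * xmax * ∑ j, max (|θ ω j| - aa) 0) ∂ℙ)
      = 2 * xmax * aa + 2 * xmax * ∫ ω, (∑ j, max (|θ ω j| - aa) 0) ∂ℙ := by
    rw [integral_add (integrable_const _) (hintESum.const_mul (2 * xmax)), integral_const]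
    simp only [probReal_univ, one_smul]
    congr 1
    exact integral_const_mul _ _
  have hS : (∫ ω, ∑ n ∈ Finset.Ico 1 t,
      ((∑ j, |X n (θ ω) j - X (n+1) (θ ω) j|) + (∑ i, |Y n (θ ω) i - Y (n+1) (θ ω) i|)
        + ∑ i, |Y'' n (θ ω) i - Y (n+1) (θ ω) i|) ∂ℙ)
      = ∑ n ∈ Finset.Ico 1 t,
        ((∫ ω, ∑ j, |X n (θ ω) j - X (n+1) (θ ω) j| ∂ℙ)
          + (∫ ω, ∑ i, |Y n (θ ω) i - Y (n+1) (θ ω) i| ∂ℙ)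
          + ∫ ω, ∑ i, |Y'' n (θ ω) i - Y (n+1) (θ ω) i| ∂ℙ) := by
    have hAB : ∀ n ∈ Finset.Ico 1 t, Integrable (fun ω =>
        (∑ j, |X n (θ ω) j - X (n+1) (θ ω) j|)
          + ∑ i, |Y n (θ ω) i - Y (n+1) (θ ω) i|) ℙ :=
      fun n hn => (hintA n hn).add (hintB n hn)
    have hABC : ∀ n ∈ Finset.Ico 1 t, Integrable (fun ω =>
        ((∑ j, |X n (θ ω) j - X (n+1) (θ ω) j|)
          + ∑ i, |Y n (θ ω) i - Y (n+1) (θ ω) i|)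
          + ∑ i, |Y'' n (θ ω) i - Y (n+1) (θ ω) i|) ℙ :=
      fun n hn => (hAB n hn).add (hintC n hn)
    rw [integral_finset_sum _ hABC]
    refine Finset.sum_congr rfl fun n hn => ?_
    rw [integral_add (hAB n hn) (hintC n hn), integral_add (hintA n hn) (hintB n hn)]
  have hE : (∫ ω, ∑ j, max (|θ ω j| - aa) 0 ∂ℙ) = (d:ℝ) * ((1/(d:ℝ)) * (1/η)) := by
    rw [integral_finset_sum _ fun j _ => hintE j,
      Finset.sum_congr rfl fun j _ => hvalE j, Finset.sum_const,
      Finset.card_univ, Fintype.card_fin, nsmul_eq_mul]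
  rw [hInf]
  have hdne : (d:ℝ) ≠ 0 := by positivity
  have hηne : η ≠ 0 := ne_of_gt hηpos
  have htail : 2 * xmax * aa + 2 * xmax * ((d:ℝ) * ((1/(d:ℝ)) * (1/η)))
      = 2 * (T:ℝ) ^ ((2:ℝ)/3) * (Real.log d + 1) * xmax := by
    rw [haadef, ← hηinv]
    field_simp
  have hGS : G * (∫ ω, (∑ n ∈ Finset.Ico 1 t, ((∑ j, |X n (θ ω) j - X (n+1) (θ ω) j|)
          + (∑ i, |Y n (θ ω) i - Y (n+1) (θ ω) i|)
          + ∑ i, |Y'' n (θ ω) i - Y (n+1) (θ ω) i|)) ∂ℙ)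
      = G * ∑ n ∈ Finset.Ico 1 t,
        ((∫ ω, ∑ j, |X n (θ ω) j - X (n+1) (θ ω) j| ∂ℙ)
          + (∫ ω, ∑ i, |Y n (θ ω) i - Y (n+1) (θ ω) i| ∂ℙ)
          + ∫ ω, ∑ i, |Y'' n (θ ω) i - Y (n+1) (θ ω) i| ∂ℙ) := by rw [hS]
  have h2E : 2 * xmax * (∫ ω, (∑ j, max (|θ ω j| - aa) 0) ∂ℙ)
      = 2 * xmax * ((d:ℝ) * ((1/(d:ℝ)) * (1/η))) := by rw [hE]
  linarith
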